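/- For every integer l with 1 ≤ l ≤ 5 and every κ > 0 there exists θ₀ ∈ (π/2, π) such that for every θ ∈ (π/2, θ₀] there is a constant c > 0 with: for all τ > 0 satisfying κ·τ·sin θ ≤ π and all z ∈ Γ^τ_{θ,κ}, one has |(γ_l(e^{−zτ})/l!)·τ^{l+1} − z^{−(l+1)}| ≤ c·τ^{l+1}. -/

import Mathlib

open Real

/-- Truncated sectorial contour Γ^τ_{θ,κ}. -/
noncomputable def contourTrunc (θ κ τ : ℝ) : Set ℂ :=
  {z : ℂ | ‖z‖ = κ ∧ |z.arg| ≤ θ} ∪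
    {z : ℂ | ∃ r : ℝ, κ ≤ r ∧ r ≤ π / (τ * Real.sin θ) ∧
      (z = (r : ℂ) * Complex.exp (θ * Complex.I) ∨
        z = (r : ℂ) * Complex.exp (-θ * Complex.I))}

/-- γ_l(ξ), the closed forms of ∑_{n≥1} n^l ξ^n for l = 1,…,5. -/
noncomputable def gammaFn : ℕ → ℂ → ℂ
  | 1, ξ => ξ / (1 - ξ) ^ 2
  | 2, ξ => (ξ + ξ ^ 2) / (1 - ξ) ^ 3
  | 3, ξ => (ξ + 4 * ξ ^ 2 + ξ ^ 3) / (1 - ξ) ^ 4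
  | 4, ξ => (ξ + 11 * ξ ^ 2 + 11 * ξ ^ 3 + ξ ^ 4) / (1 - ξ) ^ 5
  | 5, ξ => (ξ + 26 * ξ ^ 2 + 66 * ξ ^ 3 + 26 * ξ ^ 4 + ξ ^ 5) / (1 - ξ) ^ 6
  | _, _ => 0

noncomputable def gam : ℕ → ℂ → ℂ
  | 0, ξ => ξ / (1 - ξ)
  | n + 1, ξ => gammaFn (n + 1) ξ

lemma hasDerivAt_gam {l : ℕ} (hl : l ≤ 4) {w : ℂ} (hw : (1 : ℂ) - Complex.exp (-w) ≠ 0) :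
    HasDerivAt (fun x => gam l (Complex.exp (-x))) (-gam (l + 1) (Complex.exp (-w))) w := by
  have hu : HasDerivAt (fun x : ℂ => Complex.exp (-x)) (-Complex.exp (-w)) w := by
    simpa [Function.comp_def] using (Complex.hasDerivAt_exp (-w)).comp w ((hasDerivAt_id w).neg)
  set u := Complex.exp (-w) with hu2
  have hds : ∀ n : ℕ, HasDerivAt (fun x : ℂ => ((1 : ℂ) - Complex.exp (-x)) ^ n)
      ((n : ℂ) * (1 - u) ^ (n - 1) * u) w := by
    intro n
    simpa [Pi.sub_def, Pi.pow_def] using ((hasDerivAt_const w (1:ℂ)).sub hu).pow n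
  interval_cases l
  · have hd1 : HasDerivAt (fun x : ℂ => (1:ℂ) - Complex.exp (-x)) u w := by
      simpa [← hu2, Pi.sub_def] using (hasDerivAt_const w (1:ℂ)).sub hu
    have := hu.div hd1 hw
    refine this.congr_deriv ?_
    rw [← hu2]; simp only [gam, gammaFn]; field_simp; ring
  · have := hu.div (hds 2) (pow_ne_zero 2 hw)
    refine this.congr_deriv ?_
    rw [← hu2]; simp only [gam, gammaFn]; field_simp; ring
  · have hnum : HasDerivAt (fun x : ℂ => Complex.exp (-x) + Complex.exp (-x) ^ 2)
        (-u + 2 * u ^ 1 * -u) w := hu.add (hu.pow 2)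
    have := hnum.div (hds 3) (pow_ne_zero 3 hw)
    refine this.congr_deriv ?_
    rw [← hu2]; simp only [gam, gammaFn]; field_simp; ring
  · have hnum : HasDerivAt
        (fun x : ℂ => Complex.exp (-x) + 4 * Complex.exp (-x) ^ 2 + Complex.exp (-x) ^ 3)
        (-u + 4 * (2 * u ^ 1 * -u) + 3 * u ^ 2 * -u) w :=
      (hu.add ((hu.pow 2).const_mul 4)).add (hu.pow 3)
    have := hnum.div (hds 4) (pow_ne_zero 4 hw)
    refine this.congr_deriv ?_
    rw [← hu2]; simp only [gam, gammaFn]; field_simp; ring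
  · have hnum : HasDerivAt
        (fun x : ℂ => Complex.exp (-x) + 11 * Complex.exp (-x) ^ 2 + 11 * Complex.exp (-x) ^ 3
          + Complex.exp (-x) ^ 4)
        (-u + 11 * (2 * u ^ 1 * -u) + 11 * (3 * u ^ 2 * -u) + 4 * u ^ 3 * -u) w :=
      ((hu.add ((hu.pow 2).const_mul 11)).add ((hu.pow 3).const_mul 11)).add (hu.pow 4)
    have := hnum.div (hds 5) (pow_ne_zero 5 hw)
    refine this.congr_deriv ?_
    rw [← hu2]; simp only [gam, gammaFn]; field_simp; ring

noncomputable def Hfun : ℂ → ℂ := fun w => (Complex.exp w - 1)⁻¹ - w⁻¹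

noncomputable def hfun : ℂ → ℂ :=
  Function.update Hfun 0 (Filter.limUnder (nhdsWithin 0 {(0:ℂ)}ᶜ) Hfun)

lemma auxExp_ne_one {w : ℂ} (hw : w ∈ Metric.ball (0:ℂ) (2*π)) (h0 : w ≠ 0) :
    Complex.exp w ≠ 1 := by
  intro h
  rw [Complex.exp_eq_one_iff] at h
  obtain ⟨n, hn⟩ := h
  have hn0 : n ≠ 0 := by rintro rfl; simp at hn; exact h0 hn
  have : ‖w‖ = |(n:ℝ)| * (2*π) := by
    rw [hn]; simp [Complex.norm_exp, abs_mul, pi_pos.le]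
  have h1 : (1:ℝ) ≤ |(n:ℝ)| := by
    rcases lt_or_ge (|(n:ℝ)|) 1 with h | h
    · exfalso; have := abs_lt.mp (by exact_mod_cast h : |(n:ℝ)| < 1)
      have : n = 0 := by
        have := Int.abs_lt_one_iff.mp (by exact_mod_cast (abs_lt.mpr this))
        exact this
      exact hn0 this
    · exact h
  have hball : ‖w‖ < 2*π := by simpa [Complex.dist_eq] using hw
  nlinarith [pi_pos]

lemma Hfun_diffOn : DifferentiableOn ℂ Hfun (Metric.ball (0:ℂ) (2*π) \ {0}) := by
  intro w hw
  obtain ⟨hwb, hw0⟩ := hw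
  have hw0 : w ≠ 0 := hw0
  have h1 : Complex.exp w - 1 ≠ 0 := sub_ne_zero.mpr (auxExp_ne_one hwb hw0)
  exact (((Complex.differentiable_exp.differentiableAt.sub_const 1).inv h1).sub
    (differentiableAt_inv hw0)).differentiableWithinAt

lemma hfun_diffOn : DifferentiableOn ℂ hfun (Metric.ball (0:ℂ) (2*π)) := by
  have hc : Metric.ball (0:ℂ) (2*π) ∈ nhds (0:ℂ) :=
    Metric.ball_mem_nhds 0 (by positivity)
  have ho : (fun z => Hfun z - Hfun 0) =o[nhdsWithin 0 {(0:ℂ)}ᶜ] fun z => (z - 0)⁻¹ := by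
    have hH0 : Hfun 0 = 0 := by simp [Hfun]
    rw [Asymptotics.isLittleO_iff_tendsto]
    · have hslope : Filter.Tendsto (fun z : ℂ => z⁻¹ * (Complex.exp z - 1))
          (nhdsWithin 0 {(0:ℂ)}ᶜ) (nhds 1) := by
        have := hasDerivAt_iff_tendsto_slope.mp (Complex.hasDerivAt_exp 0)
        rw [slope_fun_def_field] at this
        simpa [Complex.exp_zero, div_eq_inv_mul] using this
      have h2 : Filter.Tendsto (fun z : ℂ => (z⁻¹ * (Complex.exp z - 1))⁻¹ - 1)
          (nhdsWithin 0 {(0:ℂ)}ᶜ) (nhds 0) := by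
        simpa using (hslope.inv₀ one_ne_zero).sub_const 1
      apply h2.congr'
      filter_upwards [self_mem_nhdsWithin] with z hz
      have hz0 : z ≠ 0 := hz
      rw [hH0]; simp only [Hfun]; field_simp; ring
    · intro x hx
      have : x = 0 := by simpa using inv_eq_zero.mp (by simpa using hx)
      simp [this, Hfun]
  simpa [hfun] using Complex.differentiableOn_update_limUnder_of_isLittleO hc Hfun_diffOn ho

lemma hfun_eq {w : ℂ} (h0 : w ≠ 0) : hfun w = Hfun w := Function.update_of_ne h0 _ _

lemma iter_anal (l : ℕ) : AnalyticOnNhd ℂ (iteratedDeriv l hfun) (Metric.ball (0:ℂ) (2*π)) := by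
  induction l with
  | zero => simpa [iteratedDeriv_zero] using hfun_diffOn.analyticOnNhd Metric.isOpen_ball
  | succ n ih =>
    rw [iteratedDeriv_succ]
    exact ih.deriv_of_isOpen Metric.isOpen_ball

lemma key (l : ℕ) (hl : l ≤ 5) (w : ℂ) (hwb : w ∈ Metric.ball (0:ℂ) (2*π)) (h0 : w ≠ 0) :
    iteratedDeriv l hfun w
      = (-1 : ℂ) ^ l * (gam l (Complex.exp (-w)) - (l.factorial : ℂ) * (w ^ (l + 1))⁻¹) := by
  induction l generalizing w with
  | zero =>
    have h1 : Complex.exp w - 1 ≠ 0 := sub_ne_zero.mpr (auxExp_ne_one hwb h0)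
    have h2 : (1 : ℂ) - Complex.exp (-w) ≠ 0 := by
      rw [Complex.exp_neg]
      intro h
      apply h1
      have hx : Complex.exp w ≠ 0 := Complex.exp_ne_zero w
      field_simp at h
      rw [h]; simp
    rw [iteratedDeriv_zero, hfun_eq h0]
    simp only [Hfun, gam, pow_zero, one_mul, Nat.factorial_zero, Nat.cast_one, pow_one]
    rw [Complex.exp_neg]
    have hx : Complex.exp w ≠ 0 := Complex.exp_ne_zero w
    field_simp
    ring
  | succ n ih =>
    have hn4 : n ≤ 4 := by omega
    have h2 : (1 : ℂ) - Complex.exp (-w) ≠ 0 := by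
      rw [Complex.exp_neg]
      intro h
      apply sub_ne_zero.mpr (auxExp_ne_one hwb h0)
      have hx : Complex.exp w ≠ 0 := Complex.exp_ne_zero w
      field_simp at h
      rw [h]; simp
    rw [iteratedDeriv_succ]
    have hev : iteratedDeriv n hfun =ᶠ[nhds w]
        fun x => (-1 : ℂ) ^ n * (gam n (Complex.exp (-x)) - (n.factorial : ℂ) * (x ^ (n + 1))⁻¹) := by
      have hU : IsOpen (Metric.ball (0:ℂ) (2*π) \ {0}) :=
        Metric.isOpen_ball.sdiff isClosed_singleton
      filter_upwards [hU.mem_nhds ⟨hwb, h0⟩] with x hx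
      exact ih (by omega) x hx.1 hx.2
    rw [hev.deriv_eq]
    have hpow : HasDerivAt (fun x : ℂ => (x ^ (n + 1))⁻¹)
        (-(((n : ℂ) + 1) * w ^ n) / (w ^ (n + 1)) ^ 2) w := by
      have := (hasDerivAt_pow (n + 1) w).inv (pow_ne_zero _ h0)
      simpa [Pi.inv_def] using this
    have hd : HasDerivAt
        (fun x => (-1 : ℂ) ^ n * (gam n (Complex.exp (-x)) - (n.factorial : ℂ) * (x ^ (n + 1))⁻¹))
        ((-1 : ℂ) ^ n * (-gam (n + 1) (Complex.exp (-w))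
          - (n.factorial : ℂ) * (-(((n : ℂ) + 1) * w ^ n) / (w ^ (n + 1)) ^ 2))) w :=
      (((hasDerivAt_gam hn4 h2).sub (hpow.const_mul _))).const_mul _
    rw [hd.deriv]
    rw [pow_succ, Nat.factorial_succ]
    push_cast
    field_simp
    ring

/-- For 1 ≤ l ≤ 5 and κ > 0: |(γ_l(e^{−zτ})/l!)·τ^{l+1} − z^{−(l+1)}| ≤ c·τ^{l+1}
on Γ^τ_{θ,κ}. -/
theorem gammaFn_weight_error (l : ℕ) (hl1 : 1 ≤ l) (hl5 : l ≤ 5) (κ : ℝ) (hκ : 0 < κ) :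
    ∃ θ₀ ∈ Set.Ioo (π / 2) π, ∀ θ ∈ Set.Ioc (π / 2) θ₀,
      ∃ c > (0 : ℝ), ∀ τ : ℝ, 0 < τ → κ * τ * Real.sin θ ≤ π →
        ∀ z ∈ contourTrunc θ κ τ,
          ‖gammaFn l (Complex.exp (-z * (τ : ℂ))) / (Nat.factorial l : ℂ)
                * (τ : ℂ) ^ (l + 1) - (z ^ (l + 1))⁻¹‖
            ≤ c * τ ^ (l + 1) := by
  refine ⟨3 * π / 4, ⟨by linarith [pi_pos], by linarith [pi_pos]⟩, ?_⟩
  rintro θ ⟨hθ1, hθ2⟩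
  have hθπ : θ < π := by linarith [pi_pos]
  have hs0 : 0 < Real.sin θ := Real.sin_pos_of_pos_of_lt_pi (by linarith [pi_pos]) hθπ
  have hs2 : 1 / 2 < Real.sin θ := by
    have h1 : Real.sin θ = Real.sin (π - θ) := (Real.sin_pi_sub θ).symm
    have h2 : Real.sin (π / 4) ≤ Real.sin (π - θ) := by
      apply Real.strictMonoOn_sin.monotoneOn
      · constructor <;> [linarith [pi_pos]; linarith [pi_pos]]
      · constructor <;> [linarith [pi_pos]; linarith [pi_pos]]
      · linarith
    have h3 : Real.sin (π / 4) = Real.sqrt 2 / 2 := Real.sin_pi_div_four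
    have h4 : 1 < Real.sqrt 2 := by
      nlinarith [Real.sq_sqrt (show (0:ℝ) ≤ 2 by norm_num), Real.sqrt_nonneg 2]
    linarith
  set R := π / Real.sin θ with hRdef
  have hRpos : 0 < R := by positivity
  have hR2π : R < 2 * π := by
    rw [hRdef, div_lt_iff₀ hs0]
    nlinarith [pi_pos]
  have hsub : Metric.closedBall (0:ℂ) R ⊆ Metric.ball (0:ℂ) (2*π) :=
    Metric.closedBall_subset_ball hR2π
  have cont : ContinuousOn (iteratedDeriv l hfun) (Metric.closedBall (0:ℂ) R) :=
    ((iter_anal l).continuousOn).mono hsub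
  obtain ⟨C, hC⟩ := (isCompact_closedBall (0:ℂ) R).exists_bound_of_continuousOn cont
  have hC0 : 0 ≤ C := le_trans (norm_nonneg _) (hC 0 (Metric.mem_closedBall_self hRpos.le))
  have hfacpos : (0:ℝ) < l.factorial := by positivity
  refine ⟨C / l.factorial + 1, by positivity, ?_⟩
  intro τ hτ hκτ z hz
  have hzfacts : κ ≤ ‖z‖ ∧ ‖z‖ * τ ≤ R := by
    rcases hz with ⟨hz1, _⟩ | ⟨r, hr1, hr2, hz2⟩
    · refine ⟨le_of_eq hz1.symm, ?_⟩
      rw [hz1, hRdef, le_div_iff₀ hs0]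
      nlinarith
    · have hr0 : 0 < r := lt_of_lt_of_le hκ hr1
      have habs : ‖z‖ = r := by
        rcases hz2 with rfl | rfl <;>
          simp [Complex.norm_exp, abs_of_pos hr0]
      refine ⟨by rw [habs]; exact hr1, ?_⟩
      rw [habs, hRdef]
      calc r * τ ≤ (π / (τ * Real.sin θ)) * τ := by nlinarith
        _ = π / Real.sin θ := by field_simp
  obtain ⟨hzκ, hzR⟩ := hzfacts
  have hz0 : z ≠ 0 := by
    intro h
    rw [h] at hzκ
    simp at hzκ
    linarith
  set w : ℂ := z * (τ : ℂ) with hwdef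
  have hτ0 : (τ:ℂ) ≠ 0 := by exact_mod_cast hτ.ne'
  have hw0 : w ≠ 0 := mul_ne_zero hz0 hτ0
  have hwabs : ‖w‖ = ‖z‖ * τ := by
    rw [hwdef, norm_mul, Complex.norm_real, Real.norm_eq_abs, abs_of_pos hτ]
  have hwK : w ∈ Metric.closedBall (0:ℂ) R := by
    rw [Metric.mem_closedBall, dist_zero_right, hwabs]
    exact hzR
  have hwb : w ∈ Metric.ball (0:ℂ) (2*π) := hsub hwK
  have hkey := key l hl5 w hwb hw0
  have hgam : gam l = gammaFn l := by
    obtain ⟨m, rfl⟩ : ∃ m, l = m + 1 := ⟨l - 1, (Nat.succ_pred_eq_of_pos hl1).symm⟩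
    rfl
  have hlfac : ((l.factorial : ℂ)) ≠ 0 := by
    exact_mod_cast l.factorial_ne_zero
  have h11 : ((-1:ℂ))^l * ((-1:ℂ))^l = 1 := by
    rw [← pow_add, ← two_mul, pow_mul]
    norm_num
  have hexp : (-z * (τ:ℂ)) = -w := by rw [hwdef]; ring
  have hA : gammaFn l (Complex.exp (-z * (τ:ℂ))) / (l.factorial : ℂ) * (τ:ℂ)^(l+1)
        - (z^(l+1))⁻¹
      = ((τ:ℂ)^(l+1) / (l.factorial : ℂ)) * ((-1:ℂ)^l * iteratedDeriv l hfun w) := by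
    rw [hkey, hexp, ← hgam, ← mul_assoc ((-1:ℂ)^l) ((-1:ℂ)^l), h11, one_mul]
    rw [hwdef, mul_pow]
    field_simp
  rw [hA]
  rw [norm_mul, norm_mul, norm_div, norm_pow, norm_pow]
  simp only [Complex.norm_real, Real.norm_eq_abs, Complex.norm_natCast, norm_neg, norm_one, one_pow, one_mul]
  rw [abs_of_pos hτ]
  have hDb : ‖iteratedDeriv l hfun w‖ ≤ C := by
    simpa using hC w hwK
  have hτp : (0:ℝ) < τ ^ (l+1) := by positivity
  calc τ ^ (l+1) / (l.factorial : ℝ) * ‖iteratedDeriv l hfun w‖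
      ≤ τ ^ (l+1) / (l.factorial : ℝ) * C := by
        apply mul_le_mul_of_nonneg_left hDb (by positivity)
    _ = (C / l.factorial) * τ ^ (l+1) := by ring
    _ ≤ (C / l.factorial + 1) * τ ^ (l+1) := by nlinarith
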